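/- Let W, X, Y be i.i.d. exponential random variables with rate λ > 0 (formally, coordinates of the product on (Fin 3 → ℝ) of three copies of the exponential distribution with rate λ). Then E[min(X, Y)] < E[min(X, max(W, Y))]. -/

import Mathlib

open MeasureTheory ProbabilityTheory Set Real

section Aux

variable {lam : ℝ}

lemma abs_min_le (a b : ℝ) : |min a b| ≤ |a| + |b| := by
  rcases le_total a b with h | h
  · rw [min_eq_left h]; exact le_add_of_nonneg_right (abs_nonneg b)
  · rw [min_eq_right h]; exact le_add_of_nonneg_left (abs_nonneg a)

lemma abs_max_le (a b : ℝ) : |max a b| ≤ |a| + |b| := by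
  rcases le_total a b with h | h
  · rw [max_eq_right h]; exact le_add_of_nonneg_left (abs_nonneg a)
  · rw [max_eq_left h]; exact le_add_of_nonneg_right (abs_nonneg b)

lemma measurable_exponentialPDF (r : ℝ) : Measurable (exponentialPDF r) :=
  (measurable_exponentialPDFReal r).ennreal_ofReal

lemma expMeasure_eq (r : ℝ) :
    expMeasure r = MeasureTheory.volume.withDensity (exponentialPDF r) := rfl

/-- The exponential measure of an interval `Ioo a b` with `0 ≤ a < b` is positive. -/
lemma expMeasure_Ioo_pos (hlam : 0 < lam) {a b : ℝ} (ha : 0 ≤ a) (hab : a < b) :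
    0 < expMeasure lam (Ioo a b) := by
  rw [expMeasure_eq, pos_iff_ne_zero, Ne,
    withDensity_apply_eq_zero (measurable_exponentialPDF lam)]
  have hsub : Ioo a b ⊆ {x | exponentialPDF lam x ≠ 0} ∩ Ioo a b := by
    intro x hx
    refine ⟨?_, hx⟩
    have hxpos : 0 < x := lt_of_le_of_lt ha hx.1
    have := exponentialPDFReal_pos hlam hxpos
    simp only [mem_setOf_eq, exponentialPDF, Ne, ENNReal.ofReal_eq_zero, not_le]
    exact this
  intro h
  have : MeasureTheory.volume (Ioo a b) = 0 := measure_mono_null hsub h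
  rw [Real.volume_Ioo] at this
  exact (ENNReal.ofReal_pos.2 (by linarith)).ne' this

/-- The identity function is integrable with respect to the exponential measure. -/
lemma integrable_id_expMeasure (hlam : 0 < lam) : Integrable id (expMeasure lam) := by
  rw [expMeasure_eq, integrable_withDensity_iff (measurable_exponentialPDF lam)
    (Filter.Eventually.of_forall fun x => ENNReal.ofReal_lt_top)]
  have key : IntegrableOn (fun x : ℝ => lam * (x * rexp (-(lam * x)))) (Ioi 0) := by
    have h0 : IntegrableOn (fun x : ℝ => x ^ (1 : ℝ) * rexp (-lam * x ^ (1 : ℝ))) (Ioi 0) :=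
      integrableOn_rpow_mul_exp_neg_mul_rpow (by norm_num) zero_lt_one hlam
    have h1 : IntegrableOn (fun x : ℝ => x * rexp (-(lam * x))) (Ioi 0) := by
      refine h0.congr_fun (fun x hx => ?_) measurableSet_Ioi
      dsimp only; rw [Real.rpow_one, neg_mul]
    exact h1.const_mul lam
  have heq : (fun x : ℝ => id x * (exponentialPDF lam x).toReal) =
      (Ioi (0 : ℝ)).indicator (fun x => lam * (x * rexp (-(lam * x)))) := by
    funext x
    rcases le_or_gt x 0 with hx | hx
    · rw [indicator_of_notMem (by simpa using hx)]
      rcases lt_or_eq_of_le hx with hx' | hx'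
      · rw [exponentialPDF_of_neg hx']; simp
      · simp [hx']
    · rw [indicator_of_mem (by simpa using hx), exponentialPDF_of_nonneg hx.le, id,
        ENNReal.toReal_ofReal (by positivity)]
      ring
  rw [heq, integrable_indicator_iff measurableSet_Ioi]
  exact key

/-- The coordinate map is measure preserving from the product measure to the exponential
measure. -/
lemma measurePreserving_eval_expMeasure (hlam : 0 < lam) (i : Fin 3) :
    MeasurePreserving (fun x : Fin 3 → ℝ => x i)
      (Measure.pi fun _ : Fin 3 => expMeasure lam) (expMeasure lam) := by
  haveI : IsProbabilityMeasure (expMeasure lam) := isProbabilityMeasure_expMeasure hlam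
  refine ⟨measurable_pi_apply i, ?_⟩
  ext s hs
  rw [Measure.map_apply (measurable_pi_apply i) hs]
  have hpre : (fun x : Fin 3 → ℝ => x i) ⁻¹' s
      = Set.pi univ (Function.update (fun _ : Fin 3 => (univ : Set ℝ)) i s) :=
    Set.eval_preimage
  rw [hpre, Measure.pi_pi]
  have hupd : ∀ j : Fin 3,
      expMeasure lam (Function.update (fun _ : Fin 3 => (univ : Set ℝ)) i s j)
        = Function.update (fun _ : Fin 3 => (1 : ENNReal)) i (expMeasure lam s) j := by
    intro j
    rcases eq_or_ne j i with rfl | hj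
    · simp
    · simp [Function.update_of_ne hj, measure_univ]
  rw [Finset.prod_congr rfl fun j _ => hupd j,
    Finset.prod_update_of_mem (Finset.mem_univ i)]
  simp

lemma integrable_eval (hlam : 0 < lam) (i : Fin 3) :
    Integrable (fun x : Fin 3 → ℝ => x i)
      (Measure.pi fun _ : Fin 3 => expMeasure lam) :=
  memLp_one_iff_integrable.1
    ((memLp_one_iff_integrable.2 (integrable_id_expMeasure hlam)).comp_measurePreserving
      (measurePreserving_eval_expMeasure hlam i))

end Aux

/-- For i.i.d. exponential random variables `W, X, Y` with rate `λ > 0` (coordinates of the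
product of three exponential distributions), `E[min(X, Y)] < E[min(X, max(W, Y))]`. -/
theorem exp_min_lt_min_max (lam : ℝ) (hlam : 0 < lam) :
    ∫ x : Fin 3 → ℝ, min (x 1) (x 2)
        ∂(Measure.pi fun _ : Fin 3 => expMeasure lam)
      < ∫ x : Fin 3 → ℝ, min (x 1) (max (x 0) (x 2))
        ∂(Measure.pi fun _ : Fin 3 => expMeasure lam) := by
  haveI : IsProbabilityMeasure (expMeasure lam) := isProbabilityMeasure_expMeasure hlam
  set P : Measure (Fin 3 → ℝ) := Measure.pi fun _ : Fin 3 => expMeasure lam with hP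
  set f : (Fin 3 → ℝ) → ℝ := fun x => min (x 1) (x 2) with hf
  set h : (Fin 3 → ℝ) → ℝ := fun x => min (x 1) (max (x 0) (x 2)) with hh
  have hmf : Measurable f := (measurable_pi_apply 1).min (measurable_pi_apply 2)
  have hmh : Measurable h :=
    (measurable_pi_apply 1).min ((measurable_pi_apply 0).max (measurable_pi_apply 2))
  have hev : ∀ i : Fin 3, Integrable (fun x : Fin 3 → ℝ => x i) P :=
    fun i => integrable_eval hlam i
  have hintf : Integrable f P := by
    refine ((hev 1).abs.add (hev 2).abs).mono' hmf.aestronglyMeasurable ?_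
    filter_upwards with x
    rw [Real.norm_eq_abs]
    exact abs_min_le _ _
  have hinth : Integrable h P := by
    refine ((hev 1).abs.add ((hev 0).abs.add (hev 2).abs)).mono'
      hmh.aestronglyMeasurable ?_
    filter_upwards with x
    rw [Real.norm_eq_abs]
    exact (abs_min_le _ _).trans (add_le_add le_rfl (abs_max_le _ _))
  have hle : ∀ x : Fin 3 → ℝ, f x ≤ h x := fun x =>
    min_le_min le_rfl (le_max_right _ _)
  have hsub : Integrable (fun x => h x - f x) P := hinth.sub hintf
  -- positivity of the integral of the difference
  have hpos : 0 < ∫ x, (h x - f x) ∂P := by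
    rw [integral_pos_iff_support_of_nonneg
      (fun x => sub_nonneg.2 (hle x)) hsub]
    -- the box where the difference is positive
    set S : Fin 3 → Set ℝ := ![Ioo 1 2, Ioo 1 2, Ioo 0 1] with hS
    have hbox : Set.pi univ S ⊆ Function.support fun x => h x - f x := by
      intro x hx
      have h0 : x 0 ∈ Ioo (1 : ℝ) 2 := hx 0 (mem_univ _)
      have h1 : x 1 ∈ Ioo (1 : ℝ) 2 := hx 1 (mem_univ _)
      have h2 : x 2 ∈ Ioo (0 : ℝ) 1 := hx 2 (mem_univ _)
      have hfx : f x = x 2 := min_eq_right (le_of_lt (h2.2.trans h1.1))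
      have hmax : max (x 0) (x 2) = x 0 := max_eq_left (le_of_lt (h2.2.trans h0.1))
      have hhx : 1 < h x := by
        rw [hh]; dsimp only; rw [hmax]
        exact lt_min h1.1 h0.1
      have : f x < h x := by rw [hfx]; exact h2.2.trans hhx
      exact sub_ne_zero.2 this.ne'
    refine lt_of_lt_of_le ?_ (measure_mono hbox)
    rw [hP, Measure.pi_pi]
    rw [Fin.prod_univ_three]
    have e0 : S 0 = Ioo 1 2 := rfl
    have e1 : S 1 = Ioo 1 2 := rfl
    have e2 : S 2 = Ioo 0 1 := rfl
    rw [e0, e1, e2]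
    have p1 : 0 < expMeasure lam (Ioo (1 : ℝ) 2) :=
      expMeasure_Ioo_pos hlam zero_le_one one_lt_two
    have p2 : 0 < expMeasure lam (Ioo (0 : ℝ) 1) :=
      expMeasure_Ioo_pos hlam le_rfl zero_lt_one
    exact ENNReal.mul_pos (ENNReal.mul_pos p1.ne' p1.ne').ne' p2.ne'
  have := integral_sub hinth hintf
  rw [this] at hpos
  linarith
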